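/- In the graph M_t (t ≥ 1), the set V_2 = {v_1, ..., v_t} is a resolving set; consequently dim(M_t) ≤ t. -/

import Mathlib

open SimpleGraph Function
open scoped Classical

/-- A set `S` is a resolving set of `G`: every pair of distinct vertices differ in
distance to some element of `S`. -/
def IsResolving {V : Type*} (G : SimpleGraph V) (S : Set V) : Prop :=
  ∀ x y : V, x ≠ y → ∃ s ∈ S, G.dist s x ≠ G.dist s y

/-- A fault-tolerant resolving set: removing any single vertex leaves a resolving set. -/
def IsFTResolving {V : Type*} (G : SimpleGraph V) (S : Set V) : Prop :=
  ∀ s ∈ S, IsResolving G (S \ {s})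

/-- The metric dimension of `G`. -/
noncomputable def metricDim {V : Type*} [Fintype V] (G : SimpleGraph V) : ℕ :=
  sInf {n | ∃ S : Finset V, IsResolving G ↑S ∧ S.card = n}

/-- The fault-tolerant metric dimension of `G`. -/
noncomputable def ftDim {V : Type*} [Fintype V] (G : SimpleGraph V) : ℕ :=
  sInf {n | ∃ S : Finset V, IsFTResolving G ↑S ∧ S.card = n}

/-- `S` is a `k`-resolving set: every pair of distinct vertices is distinguished
by at least `k` vertices of `S`. -/
def IsKResolving {V : Type*} [Fintype V] (G : SimpleGraph V) (k : ℕ) (S : Finset V) : Prop :=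
  ∀ x y : V, x ≠ y → k ≤ (S.filter (fun s => G.dist s x ≠ G.dist s y)).card

/-- The `k`-metric dimension of `G`. -/
noncomputable def kMetricDim {V : Type*} [Fintype V] (G : SimpleGraph V) (k : ℕ) : ℕ :=
  sInf {n | ∃ S : Finset V, IsKResolving G k S ∧ S.card = n}

/-- The graph `M_t`: a clique on all binary strings of length `t`, together with
independent vertices `v_1, …, v_t`, where `v_i` is adjacent to exactly those strings
having `1` (`true`) at coordinate `i`. -/
def Mt (t : ℕ) : SimpleGraph ((Fin t → Bool) ⊕ Fin t) where
  Adj x y :=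
    match x, y with
    | Sum.inl u, Sum.inl v => u ≠ v
    | Sum.inl u, Sum.inr i => u i = true
    | Sum.inr i, Sum.inl u => u i = true
    | Sum.inr _, Sum.inr _ => False
  symm := by
    refine ⟨?_⟩
    rintro (u | i) (v | j) h
    · exact h.symm
    · exact h
    · exact h
    · exact h
  loopless := by
    refine ⟨?_⟩
    rintro (u | i) h
    · exact h rfl
    · exact h
lemma Mt_adj_inr_inl {t : ℕ} (i : Fin t) (u : Fin t → Bool) :
    (Mt t).Adj (Sum.inr i) (Sum.inl u) ↔ u i = true := Iff.rfl

lemma Mt_walk_aux {t : ℕ} (i : Fin t) (u : Fin t → Bool) :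
    (Mt t).Reachable (Sum.inr i) (Sum.inl u) ∧ (Mt t).dist (Sum.inr i) (Sum.inl u) ≤ 2 := by
  by_cases h : u i = true
  · have hadj : (Mt t).Adj (Sum.inr i) (Sum.inl u) := h
    exact ⟨hadj.reachable, le_trans (le_of_eq (SimpleGraph.dist_eq_one_iff_adj.mpr hadj)) (by norm_num)⟩
  · set w : Fin t → Bool := Function.update u i true with hw
    have hwi : w i = true := by simp [hw]
    have hwu : w ≠ u := by
      intro he
      rw [he] at hwi
      exact h hwi
    have h1 : (Mt t).Adj (Sum.inr i) (Sum.inl w) := hwi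
    have h2 : (Mt t).Adj (Sum.inl w) (Sum.inl u) := hwu
    refine ⟨⟨h1.toWalk.append h2.toWalk⟩, ?_⟩
    have := SimpleGraph.dist_le (h1.toWalk.append h2.toWalk)
    simpa using this

lemma Mt_dist_inr_inl {t : ℕ} (i : Fin t) (u : Fin t → Bool) :
    (Mt t).dist (Sum.inr i) (Sum.inl u) = if u i = true then 1 else 2 := by
  obtain ⟨hr, hle⟩ := Mt_walk_aux i u
  by_cases h : u i = true
  · simp [h, SimpleGraph.dist_eq_one_iff_adj.mpr (show (Mt t).Adj (Sum.inr i) (Sum.inl u) from h)]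
  · rw [if_neg h]
    have h0 : (Mt t).dist (Sum.inr i) (Sum.inl u) ≠ 0 := by
      intro hc
      exact (by simp at * : ¬ (Sum.inr i : (Fin t → Bool) ⊕ Fin t) = Sum.inl u) (hr.dist_eq_zero_iff.mp hc)
    have h1 : (Mt t).dist (Sum.inr i) (Sum.inl u) ≠ 1 := by
      intro hc
      exact h (SimpleGraph.dist_eq_one_iff_adj.mp hc)
    omega

theorem stmt7 (t : ℕ) (ht : 1 ≤ t) :
    IsResolving (Mt t) (Set.range (Sum.inr : Fin t → (Fin t → Bool) ⊕ Fin t)) ∧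
      metricDim (Mt t) ≤ t := by
  have hres : IsResolving (Mt t) (Set.range (Sum.inr : Fin t → (Fin t → Bool) ⊕ Fin t)) := by
    rintro (u | i) (w | j) hne
    · -- two strings: differ at some coordinate
      have hne' : u ≠ w := by simpa using hne
      obtain ⟨i, hi⟩ := Function.ne_iff.mp hne'
      refine ⟨Sum.inr i, ⟨i, rfl⟩, ?_⟩
      rw [Mt_dist_inr_inl, Mt_dist_inr_inl]
      cases hu : u i <;> cases hw : w i <;> simp_all
    · refine ⟨Sum.inr j, ⟨j, rfl⟩, ?_⟩
      rw [Mt_dist_inr_inl, SimpleGraph.dist_self]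
      split <;> simp
    · refine ⟨Sum.inr i, ⟨i, rfl⟩, ?_⟩
      rw [Mt_dist_inr_inl, SimpleGraph.dist_self]
      split <;> simp
    · -- two v's
      have hij : i ≠ j := by simpa using hne
      refine ⟨Sum.inr i, ⟨i, rfl⟩, ?_⟩
      rw [SimpleGraph.dist_self]
      have h1 : (Mt t).Adj (Sum.inr i) (Sum.inl (fun _ => true)) := rfl
      have h2 : (Mt t).Adj (Sum.inl (fun _ => true)) (Sum.inr j) := rfl
      have hr : (Mt t).Reachable (Sum.inr i) (Sum.inr j) := ⟨h1.toWalk.append h2.toWalk⟩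
      intro h
      rw [eq_comm, hr.dist_eq_zero_iff] at h
      exact hij (by injection h)
  refine ⟨hres, ?_⟩
  have : t ∈ {n | ∃ S : Finset ((Fin t → Bool) ⊕ Fin t), IsResolving (Mt t) ↑S ∧ S.card = n} := by
    refine ⟨(Finset.univ : Finset (Fin t)).map ⟨(Sum.inr : Fin t → (Fin t → Bool) ⊕ Fin t), Sum.inr_injective⟩, ?_, by simp⟩
    have : ((Finset.univ : Finset (Fin t)).map ⟨(Sum.inr : Fin t → (Fin t → Bool) ⊕ Fin t), Sum.inr_injective⟩ : Set _)
        = Set.range (Sum.inr : Fin t → (Fin t → Bool) ⊕ Fin t) := by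
      ext x; simp
    rw [this]
    exact hres
  exact Nat.sInf_le this
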